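/- Let T be a tree on n vertices of diameter exactly 4 and of type (c_1, …, c_k) with c_1 ≥ … ≥ c_k, and let d = Σ_{i ≥ 1} i·c_{2i+1} + Σ_{i ≥ 1} i·c_{2i+2}. Then in every legal rectilinear drawing of T, the number of crossing pairs of edges is at most C(n−1, 2) − Σ_{u ∈ V(T)} C(d(u), 2) − d; equivalently, every legal rectilinear drawing of T has at least d nontrivial missed crossings (unordered pairs of nonadjacent edges whose segments do not cross). -/

import Mathlib

open Finset

/-- The open straight-line segment drawn for the edge `e` under the drawing `f`. -/
def edgeSeg {V : Type*} (f : V → ℝ × ℝ) (e : Sym2 V) : Set (ℝ × ℝ) :=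
  Sym2.lift ⟨fun u v => openSegment ℝ (f u) (f v),
    fun u v => openSegment_symm ℝ (f u) (f v)⟩ e


/-- A legal rectilinear drawing of the graph `G`: an injective placement of the vertices in
the plane such that no edge passes through (the image of) a vertex it is not incident with,
and no three (open) edge segments pass through a common point. -/
def IsLegalDrawing {V : Type*} (G : SimpleGraph V) (f : V → ℝ × ℝ) : Prop :=
  Function.Injective f ∧
  (∀ u v x : V, G.Adj u v → x ≠ u → x ≠ v → f x ∉ openSegment ℝ (f u) (f v)) ∧
  ∀ (p : ℝ × ℝ) (e₁ e₂ e₃ : Sym2 V), e₁ ∈ G.edgeSet → e₂ ∈ G.edgeSet → e₃ ∈ G.edgeSet →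
    e₁ ≠ e₂ → e₁ ≠ e₃ → e₂ ≠ e₃ →
    ¬ (p ∈ edgeSeg f e₁ ∧ p ∈ edgeSeg f e₂ ∧ p ∈ edgeSeg f e₃)

/-- The number of crossing pairs of edges in the drawing `f` of `G`: the number of unordered
pairs (two-element sets) `{e₁, e₂}` of edges sharing no endpoint whose drawn open segments
intersect. -/
noncomputable def crossCount {V : Type*} (G : SimpleGraph V) (f : V → ℝ × ℝ) : ℕ :=
  Set.ncard {s : Set (Sym2 V) | ∃ e₁ e₂ : Sym2 V,
    e₁ ∈ G.edgeSet ∧ e₂ ∈ G.edgeSet ∧ (∀ x, x ∈ e₁ → x ∉ e₂) ∧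
    (edgeSeg f e₁ ∩ edgeSeg f e₂).Nonempty ∧ s = {e₁, e₂}}


namespace D4Geo


open Finset



/-- 2D cross product / determinant. -/
def det2 (p q : ℝ × ℝ) : ℝ := p.1 * q.2 - p.2 * q.1

lemma det2_smul_left (t : ℝ) (p q : ℝ × ℝ) : det2 (t • p) q = t * det2 p q := by
  simp [det2, Prod.smul_fst, Prod.smul_snd, smul_eq_mul]; ring

lemma det2_smul_right (t : ℝ) (p q : ℝ × ℝ) : det2 p (t • q) = t * det2 p q := by
  simp [det2, Prod.smul_fst, Prod.smul_snd, smul_eq_mul]; ring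

lemma det2_self (p : ℝ × ℝ) : det2 p p = 0 := by simp [det2]; ring

lemma det2_antisymm (p q : ℝ × ℝ) : det2 p q = - det2 q p := by simp [det2]; ring

lemma det2_add_left (p p' q : ℝ × ℝ) : det2 (p + p') q = det2 p q + det2 p' q := by
  simp [det2, Prod.fst_add, Prod.snd_add]; ring

lemma det2_sub_left (p p' q : ℝ × ℝ) : det2 (p - p') q = det2 p q - det2 p' q := by
  simp [det2, Prod.fst_sub, Prod.snd_sub]; ring

lemma exists_smul_of_det2_eq_zero {p q : ℝ × ℝ} (h : det2 p q = 0) (hq : q ≠ 0) :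
    ∃ t : ℝ, p = t • q := by
  rcases eq_or_ne q.1 0 with h1 | h1
  · have h2 : q.2 ≠ 0 := by
      intro h2; exact hq (Prod.ext h1 h2)
    refine ⟨p.2 / q.2, ?_⟩
    have hp1 : p.1 = 0 := by
      simp [det2, h1] at h
      rcases h with h | h
      · exact h
      · exact absurd h h2
    apply Prod.ext <;> simp [Prod.smul_fst, Prod.smul_snd, smul_eq_mul]
    · rw [hp1, h1]; ring
    · field_simp
  · refine ⟨p.1 / q.1, ?_⟩
    apply Prod.ext <;> simp [Prod.smul_fst, Prod.smul_snd, smul_eq_mul]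
    · field_simp
    · have : p.1 * q.2 = p.2 * q.1 := by simp [det2] at h; linarith
      field_simp
      linarith [this]

/-- Membership in an open segment, in difference form. -/
lemma mem_openSegment_iff {z x y : ℝ × ℝ} :
    z ∈ openSegment ℝ x y ↔ ∃ t : ℝ, 0 < t ∧ t < 1 ∧ z - x = t • (y - x) := by
  rw [openSegment_eq_image']
  constructor
  · rintro ⟨t, ⟨ht0, ht1⟩, rfl⟩
    exact ⟨t, ht0, ht1, by simp⟩
  · rintro ⟨t, ht0, ht1, hz⟩
    refine ⟨t, ⟨ht0, ht1⟩, ?_⟩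
    have : x + (z - x) = x + t • (y - x) := by rw [hz]
    simpa using this.symm





lemma det2_sub_right (p q q' : ℝ × ℝ) : det2 p (q - q') = det2 p q - det2 p q' := by
  simp [det2, Prod.fst_sub, Prod.snd_sub]; ring

lemma det2_add_right (p q q' : ℝ × ℝ) : det2 p (q + q') = det2 p q + det2 p q' := by
  simp [det2, Prod.fst_add, Prod.snd_add]; ring

/-- Main geometric lemma: if `x` lies in the closed double cone at `v` spanned by `a` and
`b` (expressed by the determinant condition), then no segment with endpoint `x` can cross
both open segments `(v,a)` and `(v,b)`. -/
lemma lemA {v a b x w : ℝ × ℝ}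
    (hdet : det2 (a - v) (x - v) * det2 (b - v) (x - v) ≤ 0)
    (hxv : x ≠ v) (hxa : x ≠ a) (hwx : w ≠ x) (hav : a ≠ v)
    (h5 : v ∉ openSegment ℝ x w)
    (h6 : a ∉ openSegment ℝ x w)
    (h7 : x ∉ openSegment ℝ v a) :
    ¬ ((openSegment ℝ v a ∩ openSegment ℝ x w).Nonempty ∧
       (openSegment ℝ v b ∩ openSegment ℝ x w).Nonempty) := by
  rintro ⟨⟨s, hs1, hs2⟩, ⟨t, ht1, ht2⟩⟩
  obtain ⟨lam, hlam0, hlam1, hslam⟩ := mem_openSegment_iff.1 hs1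
  obtain ⟨sig, hsig0, hsig1, hssig⟩ := mem_openSegment_iff.1 hs2
  obtain ⟨mu, hmu0, hmu1, htmu⟩ := mem_openSegment_iff.1 ht1
  obtain ⟨tau, htau0, htau1, httau⟩ := mem_openSegment_iff.1 ht2
  have hsv : s - v = (s - x) + (x - v) := (sub_add_sub_cancel s x v).symm
  have htv : t - v = (t - x) + (x - v) := (sub_add_sub_cancel t x v).symm
  have key1 : lam * det2 (a - v) (w - x) = det2 (x - v) (w - x) := by
    have h1 : det2 (s - v) (w - x) = det2 (s - x) (w - x) + det2 (x - v) (w - x) := by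
      rw [hsv, det2_add_left]
    have h2 : det2 (s - x) (w - x) = 0 := by
      rw [hssig, det2_smul_left, det2_self]; ring
    have h3 : det2 (s - v) (w - x) = lam * det2 (a - v) (w - x) := by
      rw [hslam, det2_smul_left]
    rw [h3, h2] at h1; linarith
  have key2 : mu * det2 (b - v) (w - x) = det2 (x - v) (w - x) := by
    have h1 : det2 (t - v) (w - x) = det2 (t - x) (w - x) + det2 (x - v) (w - x) := by
      rw [htv, det2_add_left]
    have h2 : det2 (t - x) (w - x) = 0 := by
      rw [httau, det2_smul_left, det2_self]; ring
    have h3 : det2 (t - v) (w - x) = mu * det2 (b - v) (w - x) := by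
      rw [htmu, det2_smul_left]
    rw [h3, h2] at h1; linarith
  have keyP : det2 (a - v) (x - v) = - (sig * det2 (a - v) (w - x)) := by
    have h1 : x - v = (s - v) - sig • (w - x) := by
      rw [← hssig]; abel
    rw [h1, det2_sub_right, det2_smul_right, hslam, det2_smul_right, det2_self]
    ring
  have keyQ : det2 (b - v) (x - v) = - (tau * det2 (b - v) (w - x)) := by
    have h1 : x - v = (t - v) - tau • (w - x) := by
      rw [← httau]; abel
    rw [h1, det2_sub_right, det2_smul_right, htmu, det2_smul_right, det2_self]
    ring
  rcases eq_or_ne (det2 (b - v) (w - x)) 0 with hqu | hqu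
  · -- collinear case
    have hru : det2 (x - v) (w - x) = 0 := by rw [← key2, hqu]; ring
    have hpu : det2 (a - v) (w - x) = 0 := by
      have h' := key1; rw [hru] at h'
      rcases mul_eq_zero.1 h' with h | h
      · exact absurd h (ne_of_gt hlam0)
      · exact h
    have hu0 : (w - x) ≠ 0 := sub_ne_zero.2 hwx
    obtain ⟨cp, hcp⟩ := exists_smul_of_det2_eq_zero hpu hu0
    obtain ⟨cr, hcr⟩ := exists_smul_of_det2_eq_zero hru hu0
    have hueq : ∀ α β : ℝ, α • (w - x) = β • (w - x) → α = β := by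
      intro α β h
      have h2 : (α - β) • (w - x) = 0 := by rw [sub_smul, h]; abel
      rcases smul_eq_zero.1 h2 with h' | h'
      · exact sub_eq_zero.1 h'
      · exact absurd h' hu0
    have hsv2 : s - v = (lam * cp) • (w - x) := by
      rw [hslam, hcp, smul_smul]
    have hsv3 : s - v = (sig + cr) • (w - x) := by
      rw [hsv, hssig, hcr, ← add_smul]
    have hscal : lam * cp = sig + cr := hueq _ _ (hsv2.symm.trans hsv3)
    have hcp0 : cp ≠ 0 := by
      intro h; rw [h, zero_smul] at hcp; exact hav (sub_eq_zero.1 hcp)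
    have hcr0 : cr ≠ 0 := by
      intro h; rw [h, zero_smul] at hcr; exact hxv (sub_eq_zero.1 hcr)
    have hcrcp : cr ≠ cp := by
      intro h
      apply hxa
      have h2 : (x - v) - (a - v) = (cr - cp) • (w - x) := by rw [hcr, hcp, sub_smul]
      rw [h, sub_self, zero_smul] at h2
      have h3 : x - a = (x - v) - (a - v) := by abel
      exact sub_eq_zero.1 (h3.trans h2)
    have h5' : ¬ (0 < -cr ∧ -cr < 1) := by
      rintro ⟨hA, hB⟩
      apply h5
      rw [mem_openSegment_iff]
      refine ⟨-cr, hA, hB, ?_⟩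
      have h2 : v - x = -(x - v) := by abel
      rw [h2, hcr]
      exact (neg_smul cr _).symm
    have h7' : ∀ tt : ℝ, 0 < tt → tt < 1 → cr ≠ tt * cp := by
      intro tt h0 h1 hE
      apply h7
      rw [mem_openSegment_iff]
      refine ⟨tt, h0, h1, ?_⟩
      rw [hcr, hcp, hE, smul_smul]
    have h6' : ¬ (0 < cp - cr ∧ cp - cr < 1) := by
      rintro ⟨hA, hB⟩
      apply h6
      rw [mem_openSegment_iff]
      refine ⟨cp - cr, hA, hB, ?_⟩
      have h2 : a - x = (a - v) - (x - v) := by abel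
      rw [h2, hcp, hcr, sub_smul]
    have hint1 : cr < lam * cp := by nlinarith [hscal]
    have hint2 : lam * cp < cr + 1 := by nlinarith [hscal]
    rcases lt_or_gt_of_ne hcp0 with hcpneg | hcppos
    · -- cp < 0 : lam*cp ∈ (cp, 0)
      have hsint1 : cp < lam * cp := by nlinarith
      have hsint2 : lam * cp < 0 := by nlinarith
      have hcr_cases : cr ≤ -1 := by
        by_contra hh
        push_neg at hh
        rcases lt_or_gt_of_ne hcr0 with hcrneg | hcrpos
        · exact h5' ⟨by linarith, by linarith⟩
        · nlinarith
      have hdivpos : 0 < cr / cp := div_pos_of_neg_of_neg (by linarith) hcpneg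
      have hcrcp' : cr ≤ cp := by
        by_contra hh
        push_neg at hh
        have hlt1 : cr / cp < 1 := by
          rw [div_lt_one_iff]
          right; right; exact ⟨hcpneg, by linarith⟩
        exact h7' _ hdivpos hlt1 (div_mul_cancel₀ cr hcp0).symm
      have hlt : cp - cr < 1 := by nlinarith
      have hgt : 0 < cp - cr := by
        rcases lt_or_eq_of_le hcrcp' with h | h
        · linarith
        · exact absurd h hcrcp
      exact h6' ⟨hgt, hlt⟩
    · -- cp > 0 : lam*cp ∈ (0, cp)
      have hsint1 : 0 < lam * cp := by nlinarith
      have hsint2 : lam * cp < cp := by nlinarith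
      have hcrpos : 0 < cr := by
        rcases lt_or_gt_of_ne hcr0 with hcrneg | hcrpos
        · exfalso
          by_cases hh : cr ≤ -1
          · nlinarith
          · push_neg at hh
            exact h5' ⟨by linarith, by linarith⟩
        · exact hcrpos
      have hdivpos : 0 < cr / cp := div_pos hcrpos hcppos
      have hge : cp ≤ cr := by
        by_contra hh
        push_neg at hh
        exact h7' _ hdivpos ((div_lt_one hcppos).2 hh) (div_mul_cancel₀ cr hcp0).symm
      nlinarith
  · -- non-degenerate case: contradiction with hdet
    set P := det2 (a - v) (w - x) with hP
    set Q := det2 (b - v) (w - x) with hQ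
    set PR := det2 (a - v) (x - v) with hPR
    set QR := det2 (b - v) (x - v) with hQR
    have h1 : lam * (det2 (a - v) (w - x) * det2 (b - v) (w - x))
        = mu * (det2 (b - v) (w - x) * det2 (b - v) (w - x)) := by
      have h' := key1.trans key2.symm
      rw [show lam * (P * Q) = (lam * P) * Q by ring, h']
      ring
    have hsq : 0 < det2 (b - v) (w - x) * det2 (b - v) (w - x) := by
      rcases lt_or_gt_of_ne hqu with h | h
      · exact mul_pos_of_neg_of_neg h h
      · exact mul_pos h h
    have h2 : 0 < mu * (det2 (b - v) (w - x) * det2 (b - v) (w - x)) := mul_pos hmu0 hsq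
    have h3 : 0 < P * Q := by
      have hl : 0 < lam * (P * Q) := by rw [h1]; exact h2
      rcases mul_pos_iff.1 hl with ⟨_, h⟩ | ⟨h, _⟩
      · exact h
      · exact absurd hlam0 (not_lt.2 (le_of_lt h))
    have h4 : PR * QR = (sig * tau) * (P * Q) := by
      rw [keyP, keyQ]; ring
    have h5' : 0 < PR * QR := by
      rw [h4]; exact mul_pos (mul_pos hsig0 htau0) h3
    linarith [hdet]





lemma ivt_step (g : ℕ → ℤ) (hstep : ∀ i, |g (i+1) - g i| ≤ 2) (t : ℤ) :
    ∀ N : ℕ, g 0 ≤ t → t ≤ g N → ∃ j ≤ N, t ≤ g j ∧ g j ≤ t + 1 := by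
  intro N
  induction N with
  | zero => intro h0 hN; exact ⟨0, le_refl _, hN, by linarith⟩
  | succ N ih =>
    intro h0 hN
    by_cases h : t ≤ g N
    · obtain ⟨j, hj, hj2⟩ := ih h0 h
      exact ⟨j, le_trans hj (Nat.le_succ N), hj2⟩
    · push_neg at h
      refine ⟨N + 1, le_refl _, hN, ?_⟩
      have := hstep N
      rw [abs_le] at this
      omega

/-- The walk value `V j = 2 σ_j + e_j`. -/
def Vw (e : ℕ → ℤ) (j : ℕ) : ℤ := 2 * (∑ p ∈ Finset.range j, e p) + e j

lemma walk_exists (e : ℕ → ℤ) (he : ∀ p, e p = 1 ∨ e p = -1) (m : ℕ) (hm : 1 ≤ m) :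
    ∃ j < m, |(∑ p ∈ Finset.range j, e p) - (∑ p ∈ Finset.Ico (j+1) m, e p)| ≤ 1 := by
  have hW : ∀ j < m, (∑ p ∈ Finset.range j, e p) - (∑ p ∈ Finset.Ico (j+1) m, e p)
      = Vw e j - (∑ p ∈ Finset.range m, e p) := by
    intro j hj
    have h1 : ∑ p ∈ Finset.Ico (j+1) m, e p
        = (∑ p ∈ Finset.range m, e p) - (∑ p ∈ Finset.range (j+1), e p) := by
      rw [eq_sub_iff_add_eq, add_comm]
      exact Finset.sum_range_add_sum_Ico e hj
    rw [h1, Finset.sum_range_succ, Vw]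
    ring
  have hstep : ∀ i, |Vw e (i+1) - Vw e i| ≤ 2 := by
    intro i
    have h1 : Vw e (i+1) - Vw e i = e i + e (i+1) := by
      simp only [Vw, Finset.sum_range_succ]; ring
    rw [h1]
    rcases he i with h | h <;> rcases he (i+1) with h' | h' <;> rw [h, h'] <;> norm_num
  have hV0 : Vw e 0 = e 0 := by simp [Vw]
  have hVm : Vw e (m-1) = 2 * (∑ p ∈ Finset.range m, e p) - e (m-1) := by
    have h1 : (∑ p ∈ Finset.range m, e p) = (∑ p ∈ Finset.range (m-1), e p) + e (m-1) := by
      rw [← Finset.sum_range_succ, Nat.sub_add_cancel hm]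
    rw [Vw]
    linarith [h1]
  suffices hsuf : ∃ j < m, |Vw e j - (∑ p ∈ Finset.range m, e p)| ≤ 1 by
    obtain ⟨j, hj, hj2⟩ := hsuf
    exact ⟨j, hj, by rw [hW j hj]; exact hj2⟩
  set Sm := ∑ p ∈ Finset.range m, e p with hSm
  by_cases h0 : |Vw e 0 - Sm| ≤ 1
  · exact ⟨0, by omega, h0⟩
  · have he0 := he 0
    have hem := he (m-1)
    have h0' : Vw e 0 - Sm ≤ -2 ∨ 2 ≤ Vw e 0 - Sm := by
      rw [abs_le] at h0
      omega
    rcases h0' with hc' | hc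
    · -- increasing case : Sm ≥ V 0 + 2
      have h1 : Vw e 0 ≤ Sm - 1 := by omega
      have h2 : Sm - 1 ≤ Vw e (m-1) := by
        rw [hVm]
        rw [hV0] at hc'
        omega
      obtain ⟨j, hj, hj1, hj2⟩ := ivt_step (Vw e) hstep (Sm - 1) (m-1) h1 h2
      exact ⟨j, by omega, by rw [abs_le]; omega⟩
    · -- decreasing case : Sm ≤ V 0 - 2
      have hSneg : Sm ≤ -1 := by rw [hV0] at hc; omega
      have hstep' : ∀ i, |(-(Vw e (i+1))) - (-(Vw e i))| ≤ 2 := by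
        intro i
        rw [show -Vw e (i+1) - -Vw e i = -(Vw e (i+1) - Vw e i) by ring, abs_neg]
        exact hstep i
      have h1 : -(Vw e 0) ≤ -Sm - 1 := by omega
      have h2 : -Sm - 1 ≤ -(Vw e (m-1)) := by
        rw [hVm]
        omega
      obtain ⟨j, hj, hj1, hj2⟩ :=
        ivt_step (fun j => -(Vw e j)) (fun i => hstep' i) (-Sm - 1) (m-1) h1 h2
      exact ⟨j, by omega, by rw [abs_le]; omega⟩




attribute [local instance] Classical.propDecidable

def upper (w : ℝ × ℝ) : Prop := 0 < w.2 ∨ (w.2 = 0 ∧ 0 < w.1)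

noncomputable def nv (w : ℝ × ℝ) : ℝ × ℝ :=
  if upper w then w else if upper (-w) then -w else (1, 0)

noncomputable def sg (w : ℝ × ℝ) : ℝ := if upper w then 1 else -1

lemma upper_def {w : ℝ × ℝ} : upper w ↔ 0 < w.2 ∨ (w.2 = 0 ∧ 0 < w.1) := Iff.rfl

lemma upper_or (w : ℝ × ℝ) (h : w ≠ 0) : upper w ∨ upper (-w) := by
  rcases lt_trichotomy w.2 0 with h2 | h2 | h2
  · right; left; simp; linarith
  · rcases lt_trichotomy w.1 0 with h1 | h1 | h1
    · right; right; constructor <;> simp <;> linarith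
    · exact absurd (Prod.ext h1 h2) h
    · left; right; exact ⟨h2, h1⟩
  · left; left; exact h2

lemma upper_nv (w : ℝ × ℝ) : upper (nv w) := by
  unfold nv
  split_ifs with h1 h2
  · exact h1
  · exact h2
  · right; norm_num

lemma upper_ne_zero {w : ℝ × ℝ} (h : upper w) : w ≠ 0 := by
  intro h0
  rw [h0] at h
  rcases h with h | h
  · simp at h
  · simp at h

lemma upper_snd_nonneg {w : ℝ × ℝ} (h : upper w) : 0 ≤ w.2 := by
  rcases h with h | h
  · linarith
  · linarith [h.1.le]

lemma nv_eq (w : ℝ × ℝ) (h : w ≠ 0) : w = sg w • nv w := by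
  unfold nv sg
  split_ifs with h1 h2
  · simp
  · simp
  · rcases upper_or w h with h' | h'
    · exact absurd h' h1
    · exact absurd h' h2

lemma sg_cases (w : ℝ × ℝ) : sg w = 1 ∨ sg w = -1 := by
  unfold sg; split_ifs <;> simp

lemma det2_trans {a b c : ℝ × ℝ} (ha : upper a) (hb : upper b) (hc : upper c)
    (h1 : 0 < det2 a b) (h2 : 0 < det2 b c) : 0 < det2 a c := by
  have key : det2 a c * b.2 = det2 a b * c.2 + det2 b c * a.2 := by
    unfold det2; ring
  have ha2 := upper_snd_nonneg ha
  have hc2 := upper_snd_nonneg hc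
  rcases hb with hb2 | ⟨hb2, hb1⟩
  · -- 0 < b.2
    rcases lt_or_eq_of_le ha2 with ha2' | ha2'
    · nlinarith
    · rcases lt_or_eq_of_le hc2 with hc2' | hc2'
      · nlinarith
      · -- a.2 = 0 = c.2
        exfalso
        have hc1 : 0 < c.1 := by
          rcases hc with h | h
          · rw [← hc2'] at h; linarith
          · exact h.2
        have hbc' : det2 b c = - (b.2 * c.1) := by
          have hbc : det2 b c = b.1 * c.2 - b.2 * c.1 := rfl
          rw [hbc, ← hc2']; ring
        linarith [mul_pos hb2 hc1]
  · -- b.2 = 0, 0 < b.1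
    exfalso
    have hab' : det2 a b = - (a.2 * b.1) := by
      have hab : det2 a b = a.1 * b.2 - a.2 * b.1 := rfl
      rw [hab, hb2]; ring
    linarith [mul_nonneg ha2 hb1.le]

lemma exists_smul_of_det2_eq_zero' {p q : ℝ × ℝ} (h : det2 p q = 0) (hq : q ≠ 0) :
    ∃ t : ℝ, p = t • q := by
  rcases eq_or_ne q.1 0 with h1 | h1
  · have h2 : q.2 ≠ 0 := by
      intro h2; exact hq (Prod.ext h1 h2)
    refine ⟨p.2 / q.2, ?_⟩
    have hp1 : p.1 = 0 := by
      simp [det2, h1] at h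
      rcases h with h | h
      · exact h
      · exact absurd h h2
    apply Prod.ext <;> simp [Prod.smul_fst, Prod.smul_snd, smul_eq_mul]
    · rw [hp1, h1]; ring
    · field_simp
  · refine ⟨p.1 / q.1, ?_⟩
    apply Prod.ext <;> simp [Prod.smul_fst, Prod.smul_snd, smul_eq_mul]
    · field_simp
    · have h' : p.1 * q.2 = p.2 * q.1 := by simp [det2] at h; linarith
      field_simp
      linarith [h']

lemma upper_parallel {a b : ℝ × ℝ} (ha : upper a) (hb : upper b) (h : det2 a b = 0) :
    ∃ t : ℝ, 0 < t ∧ a = t • b := by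
  obtain ⟨t, ht⟩ := exists_smul_of_det2_eq_zero' h (upper_ne_zero hb)
  refine ⟨t, ?_, ht⟩
  have ht2 : a.2 = t * b.2 := by rw [ht]; rfl
  have ht1 : a.1 = t * b.1 := by rw [ht]; rfl
  rcases hb with hb2 | ⟨hb2, hb1⟩
  · rcases ha with ha2 | ⟨ha2, ha1⟩
    · nlinarith
    · exfalso
      have : t = 0 := by
        rcases mul_eq_zero.1 (ha2.symm.trans ht2).symm with h' | h'
        · exact h'
        · linarith
      rw [this] at ht1
      simp at ht1; linarith
  · rcases ha with ha2 | ⟨ha2, ha1⟩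
    · exfalso; rw [hb2] at ht2; simp at ht2; linarith
    · rw [hb2] at ht2
      nlinarith

/-- The sorting relation on indices, by angle of the normalized vector, ties broken by ≤. -/
def RL (ρ : ℕ → ℝ × ℝ) (i j : ℕ) : Prop :=
  0 < det2 (ρ i) (ρ j) ∨ (det2 (ρ i) (ρ j) = 0 ∧ i ≤ j)

lemma det2_antisymm' (p q : ℝ × ℝ) : det2 p q = - det2 q p := by unfold det2; ring

lemma RL_total (ρ : ℕ → ℝ × ℝ) : ∀ i j, RL ρ i j ∨ RL ρ j i := by
  intro i j
  rcases lt_trichotomy (det2 (ρ i) (ρ j)) 0 with h | h | h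
  · right; left; rw [det2_antisymm']; linarith
  · rcases le_total i j with h' | h'
    · left; right; exact ⟨h, h'⟩
    · right; right; constructor
      · rw [det2_antisymm']; linarith
      · exact h'
  · left; left; exact h

lemma RL_trans (ρ : ℕ → ℝ × ℝ) (hup : ∀ i, upper (ρ i)) :
    ∀ i j l, RL ρ i j → RL ρ j l → RL ρ i l := by
  intro i j l hij hjl
  rcases hij with hij | ⟨hij, hij'⟩
  · rcases hjl with hjl | ⟨hjl, hjl'⟩
    · exact Or.inl (det2_trans (hup i) (hup j) (hup l) hij hjl)
    · obtain ⟨t, ht, htt⟩ := upper_parallel (hup j) (hup l) hjl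
      left
      have : det2 (ρ i) (ρ j) = t * det2 (ρ i) (ρ l) := by
        rw [htt]
        unfold det2
        simp [Prod.smul_fst, Prod.smul_snd, smul_eq_mul]
        ring
      nlinarith
  · obtain ⟨t, ht, htt⟩ := upper_parallel (hup i) (hup j) hij
    rcases hjl with hjl | ⟨hjl, hjl'⟩
    · left
      have : det2 (ρ i) (ρ l) = t * det2 (ρ j) (ρ l) := by
        rw [htt]
        unfold det2
        simp [Prod.smul_fst, Prod.smul_snd, smul_eq_mul]
        ring
      nlinarith
    · right
      constructor
      · have : det2 (ρ i) (ρ l) = t * det2 (ρ j) (ρ l) := by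
          rw [htt]
          unfold det2
          simp [Prod.smul_fst, Prod.smul_snd, smul_eq_mul]
          ring
        rw [this, hjl]; ring
      · omega


lemma sum_sgn_split (s : Finset ℕ) (d : ℕ → ℝ) :
    ∑ p ∈ s, (if 0 < d p then (1:ℤ) else if d p < 0 then -1 else 0)
      = ((s.filter (fun p => 0 < d p)).card : ℤ) - ((s.filter (fun p => d p < 0)).card : ℤ) := by
  classical
  induction s using Finset.induction_on with
  | empty => simp
  | insert a s' hnotmem ih =>
    rw [Finset.sum_insert hnotmem, ih, Finset.filter_insert, Finset.filter_insert]
    split_ifs with h1 h2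
    · exfalso; linarith
    · rw [Finset.card_insert_of_notMem (by simp [hnotmem])]
      push_cast; ring
    · rw [Finset.card_insert_of_notMem (by simp [hnotmem])]
      push_cast; ring
    · push_cast; ring

lemma sum_abs_tie (s : Finset ℕ) (d : ℕ → ℝ) (e : ℕ → ℤ) (he : ∀ p, e p = 1 ∨ e p = -1) :
    |∑ p ∈ s, (if d p = 0 then 0 else e p) - ∑ p ∈ s, e p|
      ≤ ((s.filter (fun p => d p = 0)).card : ℤ) := by
  classical
  rw [← Finset.sum_sub_distrib]
  refine le_trans (Finset.abs_sum_le_sum_abs _ _) ?_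
  rw [← Finset.sum_filter_add_sum_filter_not s (fun p => d p = 0)]
  have h1 : ∀ p ∈ s.filter (fun p => d p = 0), |(if d p = 0 then 0 else e p) - e p| = 1 := by
    intro p hp
    rw [Finset.mem_filter] at hp
    rw [if_pos hp.2]
    rcases he p with h | h <;> rw [h] <;> norm_num
  have h2 : ∀ p ∈ s.filter (fun p => ¬ d p = 0), |(if d p = 0 then 0 else e p) - e p| = 0 := by
    intro p hp
    rw [Finset.mem_filter] at hp
    rw [if_neg hp.2]
    simp
  rw [Finset.sum_congr rfl h1, Finset.sum_congr rfl h2]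
  simp

set_option maxHeartbeats 2000000 in
/-- Existence of a child whose line through the root nearly halves the others. -/
lemma lemC (S : Finset ℕ) (hS : S.Nonempty) (r : ℕ → ℝ × ℝ)
    (h0 : ∀ i ∈ S, r i ≠ 0) :
    ∃ x ∈ S,
      |(((S.erase x).filter (fun a => 0 < det2 (r a) (r x))).card : ℤ) -
        (((S.erase x).filter (fun a => det2 (r a) (r x) < 0)).card : ℤ)| ≤
      (((S.erase x).filter (fun a => det2 (r a) (r x) = 0)).card : ℤ) + 1 := by
  classical
  set ρ : ℕ → ℝ × ℝ := fun i => nv (r i) with hρ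
  have hup : ∀ i, upper (ρ i) := fun i => upper_nv _
  haveI : IsTotal ℕ (RL ρ) := ⟨RL_total ρ⟩
  haveI : IsTrans ℕ (RL ρ) := ⟨fun a b c => RL_trans ρ hup a b c⟩
  obtain ⟨L, hperm, hsorted⟩ : ∃ L : List ℕ, L.Perm S.toList ∧ L.Pairwise (RL ρ) :=
    ⟨List.insertionSort (RL ρ) S.toList, List.perm_insertionSort _ _,
      List.pairwise_insertionSort _ _⟩
  have hnodup : L.Nodup := (hperm.nodup_iff).2 S.nodup_toList
  have hlen : L.length = S.card := by rw [hperm.length_eq, Finset.length_toList]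
  have hmem : ∀ i, i ∈ L ↔ i ∈ S := fun i => hperm.mem_iff.trans Finset.mem_toList
  have hm : 1 ≤ S.card := hS.card_pos
  set e' : ℕ → ℤ := fun p =>
    if h : p < L.length then (if upper (r (L.get ⟨p, h⟩)) then 1 else -1) else 1 with he'def
  have he' : ∀ p, e' p = 1 ∨ e' p = -1 := by
    intro p
    simp only [he'def]
    split
    · split
      · left; rfl
      · right; rfl
    · left; rfl
  obtain ⟨j, hjm, hjabs⟩ := walk_exists e' he' S.card hm
  have hjL : j < L.length := by omega
  set x := L.get ⟨j, hjL⟩ with hx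
  have hxS : x ∈ S := (hmem x).1 (L.get_mem _)
  refine ⟨x, hxS, ?_⟩
  set g : ℕ → ℕ := fun p => L.getD p 0 with hgdef
  have hg : ∀ {p : ℕ} (h : p < L.length), g p = L.get ⟨p, h⟩ := by
    intro p h; simp only [hgdef]; exact List.getD_eq_get L 0 ⟨p, h⟩
  have hgx : g j = x := hg hjL
  have hgS : ∀ {p : ℕ}, p < S.card → g p ∈ S := by
    intro p hp
    rw [hg (by omega)]
    exact (hmem _).1 (L.get_mem _)
  have hginj : ∀ {p q : ℕ}, p < S.card → q < S.card → g p = g q → p = q := by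
    intro p q hp hq hpq
    rw [hg (show p < L.length by omega), hg (show q < L.length by omega)] at hpq
    simpa using congrArg Fin.val ((hnodup.get_inj_iff).1 hpq)
  -- the three cards as position counts
  have cardbij : ∀ Q : ℕ → Prop,
      ((S.erase x).filter (fun a => Q a)).card
        = (((Finset.range S.card).erase j).filter (fun p => Q (g p))).card := by
    intro Q
    refine (Finset.card_bij (fun p _ => g p) ?_ ?_ ?_).symm
    · intro p hp
      rw [Finset.mem_filter, Finset.mem_erase, Finset.mem_range] at hp
      obtain ⟨⟨hpj, hpm⟩, hQ⟩ := hp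
      rw [Finset.mem_filter, Finset.mem_erase]
      refine ⟨⟨?_, hgS hpm⟩, hQ⟩
      intro hgpx
      exact hpj (hginj hpm (by omega) (hgpx.trans hgx.symm))
    · intro p hp q hq hpq
      rw [Finset.mem_filter, Finset.mem_erase, Finset.mem_range] at hp hq
      exact hginj hp.1.2 hq.1.2 hpq
    · intro a ha
      rw [Finset.mem_filter, Finset.mem_erase] at ha
      obtain ⟨⟨hax, haS⟩, hQ⟩ := ha
      obtain ⟨⟨p, hp⟩, rfl⟩ := List.mem_iff_get.1 ((hmem _).2 haS)
      refine ⟨p, ?_, ?_⟩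
      · rw [Finset.mem_filter, Finset.mem_erase, Finset.mem_range]
        refine ⟨⟨?_, by omega⟩, by rw [hg hp]; exact hQ⟩
        intro hpj
        apply hax
        rw [hx]
        congr 1
        exact Fin.ext hpj
      · exact hg hp
  -- sign decomposition
  have hdecomp : ∀ a ∈ S, det2 (r a) (r x) = (sg (r a) * sg (r x)) * det2 (ρ a) (ρ x) := by
    intro a ha
    conv_lhs => rw [nv_eq (r a) (h0 a ha), nv_eq (r x) (h0 x hxS)]
    rw [det2_smul_left, det2_smul_right]
    ring
  have hsgprod : ∀ a : ℕ, sg (r a) * sg (r x) ≠ 0 := by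
    intro a
    rcases sg_cases (r a) with h1 | h1 <;> rcases sg_cases (r x) with h2 | h2 <;>
      rw [h1, h2] <;> norm_num
  -- relation facts for positions
  have hposrel : ∀ {p : ℕ}, p < S.card → det2 (ρ (g p)) (ρ x) ≠ 0 →
      (p < j → 0 < det2 (ρ (g p)) (ρ x)) ∧ (j < p → det2 (ρ (g p)) (ρ x) < 0) := by
    intro p hp hnz
    have hpL : p < L.length := by omega
    constructor
    · intro hlt
      have hrel : RL ρ (g p) x := by
        rw [hg hpL, hx]
        exact hsorted.rel_get_of_lt (Fin.mk_lt_mk.2 hlt)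
      rcases hrel with h | h
      · exact h
      · exact absurd h.1 hnz
    · intro hgt
      have hrel : RL ρ x (g p) := by
        rw [hg hpL, hx]
        exact hsorted.rel_get_of_lt (Fin.mk_lt_mk.2 hgt)
      rcases hrel with h | h
      · rw [det2_antisymm'] at h; linarith
      · exfalso; apply hnz; rw [det2_antisymm', h.1]; ring
  set F : ℕ → ℤ := fun p =>
    if 0 < det2 (r (g p)) (r x) then 1 else if det2 (r (g p)) (r x) < 0 then -1 else 0
    with hFdef
  set η : ℕ → ℤ := fun p => if det2 (r (g p)) (r x) = 0 then 0 else e' p with hηdef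
  have hPN : (((S.erase x).filter (fun a => 0 < det2 (r a) (r x))).card : ℤ) -
      (((S.erase x).filter (fun a => det2 (r a) (r x) < 0)).card : ℤ)
      = ∑ p ∈ (Finset.range S.card).erase j, F p := by
    rw [cardbij (fun a => 0 < det2 (r a) (r x)), cardbij (fun a => det2 (r a) (r x) < 0)]
    exact (sum_sgn_split _ _).symm
  have hZeq : (((S.erase x).filter (fun a => det2 (r a) (r x) = 0)).card : ℤ)
      = ((((Finset.range S.card).erase j).filter
          (fun p => det2 (r (g p)) (r x) = 0)).card : ℤ) := by
    rw [cardbij (fun a => det2 (r a) (r x) = 0)]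
  have he'j : e' j = if upper (r x) then 1 else -1 := by
    simp only [he'def, dif_pos hjL]
    rfl
  have he'p : ∀ {p : ℕ}, p < S.card → e' p = if upper (r (g p)) then 1 else -1 := by
    intro p hp
    have hpL : p < L.length := by omega
    simp only [he'def, dif_pos hpL]
    rw [hg hpL]
  have hsprod : ∀ {p : ℕ}, p < S.card →
      ((e' p * e' j : ℤ) : ℝ) = sg (r (g p)) * sg (r x) := by
    intro p hp
    rw [he'p hp, he'j]
    unfold sg
    by_cases h1 : upper (r (g p)) <;> by_cases h2 : upper (r x) <;>
      simp only [if_pos, if_neg, h1, h2, if_true, if_false] <;> norm_num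
  have hpoint : ∀ p, p < S.card → p ≠ j → F p = e' j * (if p < j then η p else - η p) := by
    intro p hp hpj
    have haS : g p ∈ S := hgS hp
    have hd := hdecomp (g p) haS
    by_cases htie : det2 (ρ (g p)) (ρ x) = 0
    · have hdz : det2 (r (g p)) (r x) = 0 := by rw [hd, htie, mul_zero]
      simp only [hFdef, hηdef]
      rw [if_neg (by rw [hdz]; exact lt_irrefl 0), if_neg (by rw [hdz]; exact lt_irrefl 0),
        if_pos hdz]
      split_ifs <;> ring
    · have hηp : η p = e' p := by
        simp only [hηdef]
        rw [if_neg]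
        intro hdz
        rw [hd] at hdz
        rcases mul_eq_zero.1 hdz with h | h
        · exact hsgprod (g p) h
        · exact htie h
      have hkey := hposrel hp htie
      have hsp := hsprod hp
      rcases Nat.lt_or_ge p j with hplt | hpge
      · have hpos := hkey.1 hplt
        rw [if_pos hplt, hηp]
        have hFval : F p = e' p * e' j := by
          rcases he' p with h1 | h1 <;> rcases he' j with h2 | h2 <;>
            rw [h1, h2] at hsp ⊢ <;> push_cast at hsp <;>
            simp only [hFdef] <;> rw [hd, ← hsp]
          · rw [if_pos (by linarith)]; norm_num
          · rw [if_neg (by linarith), if_pos (by linarith)]; norm_num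
          · rw [if_neg (by linarith), if_pos (by linarith)]; norm_num
          · rw [if_pos (by linarith)]; norm_num
        rw [hFval]; ring
      · have hpgt : j < p := by omega
        have hneg := hkey.2 hpgt
        rw [if_neg (by omega), hηp]
        have hFval : F p = -(e' p * e' j) := by
          rcases he' p with h1 | h1 <;> rcases he' j with h2 | h2 <;>
            rw [h1, h2] at hsp ⊢ <;> push_cast at hsp <;>
            simp only [hFdef] <;> rw [hd, ← hsp]
          · rw [if_neg (by linarith), if_pos (by linarith)]; norm_num
          · rw [if_pos (by linarith)]; norm_num
          · rw [if_pos (by linarith)]; norm_num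
          · rw [if_neg (by linarith), if_pos (by linarith)]; norm_num
        rw [hFval]; ring
  -- split the sum
  have hsplit : (Finset.range S.card).erase j
      = (Finset.range j) ∪ (Finset.Ico (j+1) S.card) := by
    ext a
    simp only [Finset.mem_erase, Finset.mem_range, Finset.mem_union, Finset.mem_Ico]
    omega
  have hdisj : Disjoint (Finset.range j) (Finset.Ico (j+1) S.card) := by
    rw [Finset.disjoint_left]
    intro a ha hb
    rw [Finset.mem_range] at ha
    rw [Finset.mem_Ico] at hb
    omega
  have hsumF : ∑ p ∈ (Finset.range S.card).erase j, F p
      = e' j * ((∑ p ∈ Finset.range j, η p) - (∑ p ∈ Finset.Ico (j+1) S.card, η p)) := by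
    rw [hsplit, Finset.sum_union hdisj]
    have hA : ∑ p ∈ Finset.range j, F p = ∑ p ∈ Finset.range j, e' j * η p := by
      refine Finset.sum_congr rfl ?_
      intro p hp
      rw [Finset.mem_range] at hp
      rw [hpoint p (by omega) (by omega), if_pos hp]
    have hB : ∑ p ∈ Finset.Ico (j+1) S.card, F p
        = ∑ p ∈ Finset.Ico (j+1) S.card, e' j * (- η p) := by
      refine Finset.sum_congr rfl ?_
      intro p hp
      rw [Finset.mem_Ico] at hp
      rw [hpoint p (by omega) (by omega), if_neg (by omega)]
    rw [hA, hB, ← Finset.mul_sum, ← Finset.mul_sum, ← mul_add]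
    congr 1
    rw [Finset.sum_neg_distrib]
    ring
  -- tie counts
  have htie1 := sum_abs_tie (Finset.range j) (fun p => det2 (r (g p)) (r x)) e' he'
  have htie2 := sum_abs_tie (Finset.Ico (j+1) S.card) (fun p => det2 (r (g p)) (r x)) e' he'
  have hZsplit : ((((Finset.range S.card).erase j).filter
        (fun p => det2 (r (g p)) (r x) = 0)).card : ℤ)
      = (((Finset.range j).filter (fun p => det2 (r (g p)) (r x) = 0)).card : ℤ)
        + (((Finset.Ico (j+1) S.card).filter (fun p => det2 (r (g p)) (r x) = 0)).card : ℤ) := by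
    rw [hsplit, Finset.filter_union, Finset.card_union_of_disjoint]
    · push_cast; ring
    · exact Finset.disjoint_filter_filter hdisj
  have habsj : |e' j| = 1 := by rcases he' j with h | h <;> rw [h] <;> norm_num
  rw [hPN, hsumF, hZeq, hZsplit, abs_mul, habsj, one_mul]
  have htri : |(∑ p ∈ Finset.range j, η p) - (∑ p ∈ Finset.Ico (j+1) S.card, η p)|
      ≤ |(∑ p ∈ Finset.range j, η p) - (∑ p ∈ Finset.range j, e' p)|
        + |(∑ p ∈ Finset.range j, e' p) - (∑ p ∈ Finset.Ico (j+1) S.card, e' p)|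
        + |(∑ p ∈ Finset.Ico (j+1) S.card, e' p) - (∑ p ∈ Finset.Ico (j+1) S.card, η p)| := by
    have h1 := abs_sub_le (∑ p ∈ Finset.range j, η p) (∑ p ∈ Finset.range j, e' p)
      (∑ p ∈ Finset.Ico (j+1) S.card, η p)
    have h2 := abs_sub_le (∑ p ∈ Finset.range j, e' p)
      (∑ p ∈ Finset.Ico (j+1) S.card, e' p) (∑ p ∈ Finset.Ico (j+1) S.card, η p)
    linarith
  have hlast : |(∑ p ∈ Finset.Ico (j+1) S.card, e' p)
      - (∑ p ∈ Finset.Ico (j+1) S.card, η p)| ≤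
      (((Finset.Ico (j+1) S.card).filter (fun p => det2 (r (g p)) (r x) = 0)).card : ℤ) := by
    rw [abs_sub_comm]
    exact htie2
  simp only [hηdef] at htri ⊢
  linarith [htri, htie1, hlast, hjabs]


end D4Geo

namespace D4Geo

section Counting

/-- Sum of `c` over any `s` indices in `[1,k]` is at most the sum of the `s` largest. -/
lemma sub2 (c : ℕ → ℕ) (k : ℕ) (hsort : ∀ i j, 1 ≤ i → i ≤ j → j ≤ k → c j ≤ c i) :
    ∀ s : ℕ, ∀ B : Finset ℕ, B ⊆ Finset.Icc 1 k → B.card = s →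
      ∑ i ∈ B, c i ≤ ∑ i ∈ Finset.Icc 1 s, c i := by
  intro s
  induction s with
  | zero =>
    intro B hB hcard
    rw [Finset.card_eq_zero.1 hcard]
    simp
  | succ s ihs =>
    intro B hB hcard
    have hne : B.Nonempty := Finset.card_pos.1 (by omega)
    set m := B.max' hne with hm
    have hmB : m ∈ B := B.max'_mem hne
    have hmIcc := Finset.mem_Icc.1 (hB hmB)
    have hsm : s + 1 ≤ m := by
      have hsub : B ⊆ Finset.Icc 1 m := by
        intro b hb
        rw [Finset.mem_Icc]
        exact ⟨(Finset.mem_Icc.1 (hB hb)).1, B.le_max' b hb⟩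
      have := Finset.card_le_card hsub
      rw [hcard, Nat.card_Icc] at this
      omega
    have hcm : c m ≤ c (s + 1) := hsort (s+1) m (by omega) hsm hmIcc.2
    have hBsum : ∑ i ∈ B, c i = ∑ i ∈ B.erase m, c i + c m :=
      (Finset.sum_erase_add B c hmB).symm
    have hIH := ihs (B.erase m) (le_trans (Finset.erase_subset m B) hB)
      (by rw [Finset.card_erase_of_mem hmB, hcard]; omega)
    have hIcc : ∑ i ∈ Finset.Icc 1 (s+1), c i = ∑ i ∈ Finset.Icc 1 s, c i + c (s+1) := by
      rw [← Finset.sum_Icc_succ_top (by omega : 1 ≤ s + 1)]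
    omega

/-- Splitting `Icc 1 k` at `2t`. -/
lemma icc_split (kk t : ℕ) (h : t ≤ kk) (c : ℕ → ℕ) :
    ∑ i ∈ Finset.Icc 1 kk, c i = ∑ i ∈ Finset.Icc 1 t, c i + ∑ i ∈ Finset.Icc (t+1) kk, c i := by
  rw [← Finset.sum_union]
  · congr 1
    ext a
    simp only [Finset.mem_union, Finset.mem_Icc]
    omega
  · rw [Finset.disjoint_left]
    intro a ha hb
    rw [Finset.mem_Icc] at ha hb
    omega

/-- The rearrangement step: for any enumeration `L` of `Icc 1 k`,
the coefficient-weighted sum dominates the sorted one. -/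
lemma rearrange (c : ℕ → ℕ) (k : ℕ) (hsort : ∀ i j, 1 ≤ i → i ≤ j → j ≤ k → c j ≤ c i)
    (L : List ℕ) (hnd : L.Nodup) (hfin : L.toFinset = Finset.Icc 1 k) :
    ∑ jj ∈ Finset.range k, (jj / 2) * c (jj + 1)
      ≤ ∑ jj ∈ Finset.range k, (jj / 2) * c (L.getD jj 0) := by
  classical
  have hlen : L.length = k := by
    have h1 : L.toFinset.card = L.length := List.toFinset_card_of_nodup hnd
    rw [hfin, Nat.card_Icc] at h1
    omega
  -- double counting over t for an arbitrary value function
  have hswap : ∀ a : ℕ → ℕ, ∑ jj ∈ Finset.range k, (jj / 2) * a jj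
      = ∑ t ∈ Finset.Icc 1 k, ∑ jj ∈ (Finset.range k).filter (fun jj => 2*t ≤ jj), a jj := by
    intro a
    calc ∑ jj ∈ Finset.range k, (jj / 2) * a jj
        = ∑ jj ∈ Finset.range k,
            ∑ _t ∈ (Finset.Icc 1 k).filter (fun t => 2*t ≤ jj), a jj := by
          apply Finset.sum_congr rfl
          intro jj hjj
          rw [Finset.mem_range] at hjj
          rw [Finset.sum_const, smul_eq_mul]
          have h4 : (Finset.Icc 1 k).filter (fun t => 2*t ≤ jj) = Finset.Icc 1 (jj / 2) := by
            ext t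
            simp only [Finset.mem_filter, Finset.mem_Icc]
            omega
          rw [h4, Nat.card_Icc]
          congr 1
      _ = ∑ t ∈ Finset.Icc 1 k, ∑ jj ∈ (Finset.range k).filter (fun jj => 2*t ≤ jj), a jj := by
          apply Finset.sum_comm'
          intro jj t
          simp only [Finset.mem_filter, Finset.mem_range, Finset.mem_Icc]
          constructor
          · rintro ⟨h1, h2, h3⟩
            exact ⟨⟨h1, h3⟩, h2⟩
          · rintro ⟨⟨h1, h3⟩, h2⟩
            exact ⟨h1, h2, h3⟩
  rw [hswap, hswap]
  apply Finset.sum_le_sum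
  intro t ht
  rw [Finset.mem_Icc] at ht
  by_cases hkt : 2*t < k
  · -- LHS_t = ∑_{Icc (2t+1) k} c
    have hL : ∑ jj ∈ (Finset.range k).filter (fun jj => 2*t ≤ jj), c (jj + 1)
        = ∑ i ∈ Finset.Icc (2*t+1) k, c i := by
      have h1 : (Finset.range k).filter (fun jj => 2*t ≤ jj) = Finset.Ico (2*t) k := by
        ext jj
        simp only [Finset.mem_filter, Finset.mem_range, Finset.mem_Ico]
        omega
      rw [h1]
      rw [Finset.sum_Ico_eq_sum_range]
      have h2 : Finset.Icc (2*t+1) k = Finset.Ico (2*t+1) (k+1) := by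
        ext i
        simp only [Finset.mem_Icc, Finset.mem_Ico]
        omega
      rw [h2, Finset.sum_Ico_eq_sum_range]
      have h3 : k + 1 - (2*t+1) = k - 2*t := by omega
      rw [h3]
      apply Finset.sum_congr rfl
      intro i _
      congr 1
      omega
    rw [hL]
    -- RHS_t = ∑ over the image set
    set A : Finset ℕ := ((Finset.range k).filter (fun jj => 2*t ≤ jj)).image
      (fun jj => L.getD jj 0) with hA
    have hgmem : ∀ jj, jj < k → L.getD jj 0 ∈ Finset.Icc 1 k := by
      intro jj hjj
      rw [← hfin, List.mem_toFinset]
      rw [List.getD_eq_get L 0 ⟨jj, (by omega : jj < L.length)⟩]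
      exact L.get_mem _
    have hginj : ∀ jj₁, jj₁ < k → ∀ jj₂, jj₂ < k → L.getD jj₁ 0 = L.getD jj₂ 0 → jj₁ = jj₂ := by
      intro jj₁ h₁ jj₂ h₂ heq
      rw [List.getD_eq_get L 0 ⟨jj₁, (by omega : jj₁ < L.length)⟩,
        List.getD_eq_get L 0 ⟨jj₂, (by omega : jj₂ < L.length)⟩] at heq
      simpa using congrArg Fin.val ((hnd.get_inj_iff).1 heq)
    have hRHS : ∑ jj ∈ (Finset.range k).filter (fun jj => 2*t ≤ jj), c (L.getD jj 0)
        = ∑ i ∈ A, c i := by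
      rw [hA]
      rw [Finset.sum_image]
      intro jj₁ h₁ jj₂ h₂ heq
      rw [Finset.mem_coe, Finset.mem_filter, Finset.mem_range] at h₁ h₂
      exact hginj jj₁ h₁.1 jj₂ h₂.1 heq
    rw [hRHS]
    -- now A ⊆ Icc 1 k with card k - 2t
    have hAsub : A ⊆ Finset.Icc 1 k := by
      intro i hi
      rw [hA, Finset.mem_image] at hi
      obtain ⟨jj, hjj, rfl⟩ := hi
      rw [Finset.mem_filter, Finset.mem_range] at hjj
      exact hgmem jj hjj.1
    have hAcard : A.card = k - 2*t := by
      rw [hA, Finset.card_image_of_injOn]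
      · have : (Finset.range k).filter (fun jj => 2*t ≤ jj) = Finset.Ico (2*t) k := by
          ext jj
          simp only [Finset.mem_filter, Finset.mem_range, Finset.mem_Ico]
          omega
        rw [this, Nat.card_Ico]
      · intro jj₁ h₁ jj₂ h₂ heq
        rw [Finset.coe_filter, Set.mem_setOf_eq, Finset.mem_range] at h₁ h₂
        exact hginj jj₁ h₁.1 jj₂ h₂.1 heq
    -- complement bound
    have hcompsub : Finset.Icc 1 k \ A ⊆ Finset.Icc 1 k := Finset.sdiff_subset
    have hcompcard : (Finset.Icc 1 k \ A).card = 2*t := by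
      rw [Finset.card_sdiff_of_subset hAsub, Nat.card_Icc, hAcard]
      omega
    have hcomp := sub2 c k hsort (2*t) (Finset.Icc 1 k \ A) hcompsub hcompcard
    have htotal : ∑ i ∈ Finset.Icc 1 k, c i = ∑ i ∈ A, c i + ∑ i ∈ Finset.Icc 1 k \ A, c i := by
      rw [← Finset.sum_union (Finset.disjoint_sdiff)]
      congr 1
      rw [Finset.union_sdiff_of_subset hAsub]
    have hsplit := icc_split k (2*t) (by omega) c
    omega
  · -- 2t ≥ k : both sums are empty/zero
    have h1 : (Finset.range k).filter (fun jj => 2*t ≤ jj) = ∅ := by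
      ext jj
      simp only [Finset.mem_filter, Finset.mem_range, Finset.notMem_empty, iff_false]
      omega
    rw [h1]
    simp

/-- The `d` quantity identity. -/
lemma d_identity (c : ℕ → ℕ) (k : ℕ) :
    ∑ i ∈ (Finset.Icc 1 k).filter (fun i => 2 * i + 1 ≤ k), i * c (2 * i + 1)
      + ∑ i ∈ (Finset.Icc 1 k).filter (fun i => 2 * i + 2 ≤ k), i * c (2 * i + 2)
    = ∑ jj ∈ Finset.range k, (jj / 2) * c (jj + 1) := by
  classical
  have hrange : ∑ jj ∈ Finset.range k, (jj / 2) * c (jj + 1)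
      = ∑ j ∈ Finset.Icc 1 k, ((j - 1) / 2) * c j := by
    have h0 : Finset.Icc 1 k = Finset.Ico 1 (k+1) := by
      ext a
      simp only [Finset.mem_Icc, Finset.mem_Ico]
      omega
    rw [h0, Finset.sum_Ico_eq_sum_range]
    have h1 : k + 1 - 1 = k := by omega
    rw [h1]
    apply Finset.sum_congr rfl
    intro jj _
    have h2 : (1 + jj - 1) / 2 = jj / 2 := by omega
    rw [h2]
    congr 2
    omega
  rw [hrange]
  have hsplit1 := Finset.sum_filter_add_sum_filter_not (Finset.Icc 1 k)
    (fun j => 3 ≤ j) (fun j => ((j - 1) / 2) * c j)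
  have hz : ∑ j ∈ (Finset.Icc 1 k).filter (fun j => ¬ 3 ≤ j), ((j - 1) / 2) * c j = 0 := by
    apply Finset.sum_eq_zero
    intro j hj
    rw [Finset.mem_filter, Finset.mem_Icc] at hj
    have : (j - 1) / 2 = 0 := by omega
    rw [this]; ring
  have hsplit2 := Finset.sum_filter_add_sum_filter_not
    ((Finset.Icc 1 k).filter (fun j => 3 ≤ j)) (fun j => j % 2 = 1)
    (fun j => ((j - 1) / 2) * c j)
  rw [Finset.filter_filter, Finset.filter_filter] at hsplit2
  have hodd : ∑ i ∈ (Finset.Icc 1 k).filter (fun i => 2 * i + 1 ≤ k), i * c (2 * i + 1)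
      = ∑ j ∈ (Finset.Icc 1 k).filter (fun j => 3 ≤ j ∧ j % 2 = 1), ((j - 1) / 2) * c j := by
    apply Finset.sum_nbij' (i := fun i => 2 * i + 1) (j := fun j => (j - 1) / 2)
    · intro i hi
      rw [Finset.mem_filter, Finset.mem_Icc] at hi
      rw [Finset.mem_filter, Finset.mem_Icc]
      omega
    · intro j hj
      rw [Finset.mem_filter, Finset.mem_Icc] at hj
      rw [Finset.mem_filter, Finset.mem_Icc]
      omega
    · intro i hi
      rw [Finset.mem_filter, Finset.mem_Icc] at hi
      omega
    · intro j hj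
      rw [Finset.mem_filter, Finset.mem_Icc] at hj
      omega
    · intro i hi
      rw [Finset.mem_filter, Finset.mem_Icc] at hi
      have : (2 * i + 1 - 1) / 2 = i := by omega
      rw [this]
  have heven : ∑ i ∈ (Finset.Icc 1 k).filter (fun i => 2 * i + 2 ≤ k), i * c (2 * i + 2)
      = ∑ j ∈ (Finset.Icc 1 k).filter (fun j => 3 ≤ j ∧ ¬ j % 2 = 1), ((j - 1) / 2) * c j := by
    apply Finset.sum_nbij' (i := fun i => 2 * i + 2) (j := fun j => (j - 1) / 2)
    · intro i hi
      rw [Finset.mem_filter, Finset.mem_Icc] at hi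
      rw [Finset.mem_filter, Finset.mem_Icc]
      omega
    · intro j hj
      rw [Finset.mem_filter, Finset.mem_Icc] at hj
      rw [Finset.mem_filter, Finset.mem_Icc]
      omega
    · intro i hi
      rw [Finset.mem_filter, Finset.mem_Icc] at hi
      omega
    · intro j hj
      rw [Finset.mem_filter, Finset.mem_Icc] at hj
      omega
    · intro i hi
      rw [Finset.mem_filter, Finset.mem_Icc] at hi
      have : (2 * i + 2 - 1) / 2 = i := by omega
      rw [this]
  rw [hodd, heven]
  omega

end Counting

section MainPart

variable {n k : ℕ} (T : SimpleGraph (Fin n)) (v : Fin n) (u : ℕ → Fin n) (c : ℕ → ℕ)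
  (f : Fin n → ℝ × ℝ)

/-- The set of children (in the plane-tree sense) of the `x`-th child of the root. -/
def childF [DecidableRel T.Adj] (x : ℕ) : Finset (Fin n) := T.neighborFinset (u x) \ {v}

/-- The leaf edge from `u x` to the grandchild `w`. -/
def leafE (x : ℕ) (w : Fin n) : Sym2 (Fin n) := s(u x, w)

/-- The root edge from `v` to `u a`. -/
def rootE (a : ℕ) : Sym2 (Fin n) := s(v, u a)

lemma edgeSeg_mk (a b : Fin n) : edgeSeg f s(a, b) = openSegment ℝ (f a) (f b) := rfl

lemma no_triangle {V : Type*} {G : SimpleGraph V} (hG : G.IsAcyclic) {a b d : V}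
    (h1 : G.Adj a b) (h2 : G.Adj b d) (h3 : G.Adj a d) : False := by
  have hpu := SimpleGraph.isAcyclic_iff_path_unique.1 hG
  have hpath : (SimpleGraph.Walk.cons h1 (SimpleGraph.Walk.cons h2 SimpleGraph.Walk.nil)).IsPath := by
    rw [SimpleGraph.Walk.isPath_def]
    simp [h1.ne, h2.ne, h3.ne]
  have key := hpu ⟨SimpleGraph.Walk.cons h1 (SimpleGraph.Walk.cons h2 SimpleGraph.Walk.nil), hpath⟩
    (SimpleGraph.Path.singleton h3)
  have hlen := congrArg (fun q : G.Path a d => q.1.length) key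
  simp only [SimpleGraph.Path.singleton, SimpleGraph.Walk.length_cons,
    SimpleGraph.Walk.length_nil] at hlen
  omega

variable [DecidableRel T.Adj]

lemma main_induct
    (hacy : T.IsAcyclic)
    (hfInj : Function.Injective f)
    (hfSeg : ∀ a b x : Fin n, T.Adj a b → x ≠ a → x ≠ b → f x ∉ openSegment ℝ (f a) (f b))
    (huinj : Set.InjOn u (Set.Icc 1 k))
    (huadj : ∀ i ∈ Finset.Icc 1 k, T.Adj v (u i))
    (hc : ∀ i ∈ Finset.Icc 1 k, c i = T.degree (u i) - 1)
    (S : Finset ℕ) (hSk : S ⊆ Finset.Icc 1 k) :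
    ∃ MF : Finset (Finset (Sym2 (Fin n))),
      (∀ t ∈ MF, ∃ x' ∈ S, ∃ w' ∈ childF T v u x', ∃ a ∈ S, a ≠ x' ∧
          t = {leafE u x' w', rootE v u a} ∧
          ¬ (edgeSeg f (leafE u x' w') ∩ edgeSeg f (rootE v u a)).Nonempty) ∧
      ∃ L : List ℕ, L.Nodup ∧ L.toFinset = S ∧
        (∑ jj ∈ Finset.range L.length, (jj / 2) * c (L.getD jj 0)) ≤ MF.card := by
  classical
  revert hSk
  induction S using Finset.strongInduction with
  | _ S ih =>
  intro hSk
  rcases S.eq_empty_or_nonempty with rfl | hSne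
  · refine ⟨∅, by simp, [], by simp, by simp, by simp⟩
  -- basic facts
  have hAdjS : ∀ i ∈ S, T.Adj v (u i) := fun i hi => huadj i (hSk hi)
  have hne_uv : ∀ i ∈ S, u i ≠ v := fun i hi => (hAdjS i hi).ne'
  have huinjS : ∀ i ∈ S, ∀ j ∈ S, u i = u j → i = j := by
    intro i hi j hj hij
    have h1 := Finset.mem_Icc.1 (hSk hi)
    have h2 := Finset.mem_Icc.1 (hSk hj)
    exact huinj (Set.mem_Icc.2 h1) (Set.mem_Icc.2 h2) hij
  set r : ℕ → ℝ × ℝ := fun i => f (u i) - f v with hrdef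
  have hr0 : ∀ i ∈ S, r i ≠ 0 := by
    intro i hi
    simp only [hrdef]
    exact sub_ne_zero.2 (fun h => hne_uv i hi (hfInj h))
  obtain ⟨x, hxS, hbal⟩ := lemC S hSne r hr0
  have hxIcc : x ∈ Finset.Icc 1 k := hSk hxS
  have hAdjx : T.Adj v (u x) := hAdjS x hxS
  -- facts about grandchildren
  have hchildS : ∀ x' ∈ S, ∀ w' ∈ childF T v u x', T.Adj (u x') w' ∧ w' ≠ v := by
    intro x' hx' w hw
    rw [childF, Finset.mem_sdiff, SimpleGraph.mem_neighborFinset] at hw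
    exact ⟨hw.1, by simpa using hw.2⟩
  have hw_ne_ua : ∀ x' ∈ S, ∀ w ∈ childF T v u x', ∀ a ∈ S, w ≠ u a := by
    intro x' hx' w hw a ha hwa
    obtain ⟨hadj, hwv⟩ := hchildS x' hx' w hw
    rw [hwa] at hadj
    exact no_triangle hacy (hAdjS x' hx') hadj (hAdjS a ha)
  have hchild : ∀ w ∈ childF T v u x, T.Adj (u x) w ∧ w ≠ v := hchildS x hxS
  -- the per-grandchild missed-roots bound
  have hmissed : ∀ w ∈ childF T v u x,
      (S.card - 1) / 2 ≤ ((S.erase x).filter (fun a =>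
        ¬ (edgeSeg f (leafE u x w) ∩ edgeSeg f (rootE v u a)).Nonempty)).card := by
    intro w hw
    obtain ⟨hwAdj, hwv⟩ := hchild w hw
    have hpart := Finset.card_filter_add_card_filter_not
      (s := S.erase x) (p := fun a => (edgeSeg f (leafE u x w) ∩ edgeSeg f (rootE v u a)).Nonempty)
    have hcrossProd : ∀ a ∈ (S.erase x).filter (fun a =>
        (edgeSeg f (leafE u x w) ∩ edgeSeg f (rootE v u a)).Nonempty),
        ∀ b ∈ (S.erase x).filter (fun a =>
        (edgeSeg f (leafE u x w) ∩ edgeSeg f (rootE v u a)).Nonempty),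
        a ≠ b → 0 < det2 (r a) (r x) * det2 (r b) (r x) := by
      intro a ha b hb hab
      rw [Finset.mem_filter, Finset.mem_erase] at ha hb
      obtain ⟨⟨hax, haS⟩, hacr⟩ := ha
      obtain ⟨⟨hbx, hbS⟩, hbcr⟩ := hb
      by_contra hle
      push_neg at hle
      have hxa : u x ≠ u a := fun h => hax (huinjS x hxS a haS h).symm
      have hxb : u x ≠ u b := fun h => hbx (huinjS x hxS b hbS h).symm
      refine lemA (v := f v) (a := f (u a)) (b := f (u b)) (x := f (u x)) (w := f w)
        ?_ ?_ ?_ ?_ ?_ ?_ ?_ ?_ ⟨?_, ?_⟩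
      · simpa only [hrdef] using hle
      · exact fun h => hne_uv x hxS (hfInj h)
      · exact fun h => hxa (hfInj h)
      · exact fun h => hwAdj.ne' (hfInj h)
      · exact fun h => hne_uv a haS (hfInj h)
      · exact hfSeg (u x) w v hwAdj (Ne.symm (hne_uv x hxS)) (Ne.symm hwv)
      · exact hfSeg (u x) w (u a) hwAdj hxa.symm (Ne.symm (hw_ne_ua x hxS w hw a haS))
      · exact hfSeg v (u a) (u x) (hAdjS a haS) (hne_uv x hxS) (fun h => hxa h)
      · rw [Set.inter_comm]
        simpa only [leafE, rootE, edgeSeg_mk] using hacr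
      · rw [Set.inter_comm]
        simpa only [leafE, rootE, edgeSeg_mk] using hbcr
    -- trichotomy partition of S.erase x
    have htri : ((S.erase x).filter (fun a => 0 < det2 (r a) (r x))).card
        + ((S.erase x).filter (fun a => det2 (r a) (r x) < 0)).card
        + ((S.erase x).filter (fun a => det2 (r a) (r x) = 0)).card
        = (S.erase x).card := by
      have h1 := Finset.card_filter_add_card_filter_not
        (s := S.erase x) (p := fun a => 0 < det2 (r a) (r x))
      have h2 := Finset.card_filter_add_card_filter_not
        (s := (S.erase x).filter (fun a => ¬ 0 < det2 (r a) (r x)))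
        (p := fun a => det2 (r a) (r x) < 0)
      rw [Finset.filter_filter, Finset.filter_filter] at h2
      have e1 : (S.erase x).filter (fun a => ¬ 0 < det2 (r a) (r x) ∧ det2 (r a) (r x) < 0)
          = (S.erase x).filter (fun a => det2 (r a) (r x) < 0) := by
        apply Finset.filter_congr
        intro a _
        constructor
        · exact fun h => h.2
        · exact fun h => ⟨by linarith, h⟩
      have e2 : (S.erase x).filter (fun a => ¬ 0 < det2 (r a) (r x) ∧ ¬ det2 (r a) (r x) < 0)
          = (S.erase x).filter (fun a => det2 (r a) (r x) = 0) := by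
        apply Finset.filter_congr
        intro a _
        constructor
        · intro h; push_neg at h; linarith [h.1, h.2]
        · intro h; rw [h]; norm_num
      rw [e1, e2] at h2
      omega
    -- bound the crossed set and conclude
    have hcarderase : (S.erase x).card = S.card - 1 := Finset.card_erase_of_mem hxS
    rw [abs_le] at hbal
    rcases le_or_gt ((S.erase x).filter (fun a =>
        (edgeSeg f (leafE u x w) ∩ edgeSeg f (rootE v u a)).Nonempty)).card 1 with hcc | hcc
    · omega
    · obtain ⟨a0, ha0, b0, hb0, hne0⟩ := Finset.one_lt_card.1 hcc
      rcases lt_trichotomy (det2 (r a0) (r x)) 0 with hs | hs | hs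
      · have hsub : ((S.erase x).filter (fun a =>
            (edgeSeg f (leafE u x w) ∩ edgeSeg f (rootE v u a)).Nonempty))
            ⊆ (S.erase x).filter (fun a => det2 (r a) (r x) < 0) := by
          intro b hb
          rw [Finset.mem_filter]
          refine ⟨(Finset.mem_filter.1 hb).1, ?_⟩
          rcases eq_or_ne b a0 with rfl | hba
          · exact hs
          · have := hcrossProd a0 ha0 b hb (Ne.symm hba)
            nlinarith
        have hle := Finset.card_le_card hsub
        omega
      · exfalso
        have := hcrossProd a0 ha0 b0 hb0 hne0
        rw [hs] at this
        simp at this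
      · have hsub : ((S.erase x).filter (fun a =>
            (edgeSeg f (leafE u x w) ∩ edgeSeg f (rootE v u a)).Nonempty))
            ⊆ (S.erase x).filter (fun a => 0 < det2 (r a) (r x)) := by
          intro b hb
          rw [Finset.mem_filter]
          refine ⟨(Finset.mem_filter.1 hb).1, ?_⟩
          rcases eq_or_ne b a0 with rfl | hba
          · exact hs
          · have := hcrossProd a0 ha0 b hb (Ne.symm hba)
            nlinarith
        have hle := Finset.card_le_card hsub
        omega
  -- number of grandchildren
  have hchildcard : (childF T v u x).card = c x := by
    rw [childF, Finset.card_sdiff_of_subset]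
    · rw [Finset.card_singleton, SimpleGraph.card_neighborFinset_eq_degree, hc x hxIcc]
    · intro y hy
      rw [Finset.mem_singleton] at hy
      rw [hy, SimpleGraph.mem_neighborFinset]
      exact hAdjx.symm
  -- new missed pairs
  set MFnew : Finset (Finset (Sym2 (Fin n))) := (childF T v u x).biUnion (fun w =>
    ((S.erase x).filter (fun a =>
      ¬ (edgeSeg f (leafE u x w) ∩ edgeSeg f (rootE v u a)).Nonempty)).image
      (fun a => ({leafE u x w, rootE v u a} : Finset (Sym2 (Fin n))))) with hMFnewdef

  -- basic distinctness facts about the edge pairs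
  have hleaf_ne_root : ∀ x' ∈ S, ∀ w' ∈ childF T v u x', ∀ a : ℕ,
      leafE u x' w' ≠ rootE v u a := by
    intro x' hx' w' hw' a heq
    have hvmem : v ∈ leafE u x' w' := by
      rw [heq, rootE]
      exact Sym2.mem_mk_left v (u a)
    rw [leafE, Sym2.mem_iff] at hvmem
    rcases hvmem with h | h
    · exact hne_uv x' hx' h.symm
    · exact (hchildS x' hx' w' hw').2 h.symm
  have hleaf_inj : ∀ x₁ ∈ S, ∀ x₂ ∈ S, ∀ w₁ ∈ childF T v u x₁, ∀ w₂ ∈ childF T v u x₂,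
      leafE u x₁ w₁ = leafE u x₂ w₂ → x₁ = x₂ ∧ w₁ = w₂ := by
    intro x₁ hx₁ x₂ hx₂ w₁ hw₁ w₂ hw₂ heq
    rw [leafE, leafE, Sym2.eq_iff] at heq
    rcases heq with ⟨h1, h2⟩ | ⟨h1, h2⟩
    · exact ⟨huinjS x₁ hx₁ x₂ hx₂ h1, h2⟩
    · exact absurd h1.symm (hw_ne_ua x₂ hx₂ w₂ hw₂ x₁ hx₁)
  have hroot_inj : ∀ a₁ ∈ S, ∀ a₂ ∈ S, rootE v u a₁ = rootE v u a₂ → a₁ = a₂ := by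
    intro a₁ ha₁ a₂ ha₂ heq
    rw [rootE, rootE, Sym2.eq_iff] at heq
    rcases heq with ⟨_, h2⟩ | ⟨h1, h2⟩
    · exact huinjS a₁ ha₁ a₂ ha₂ h2
    · exact absurd h1.symm (hne_uv a₂ ha₂)
  have hpair_eq : ∀ x₁ ∈ S, ∀ x₂ ∈ S, ∀ w₁ ∈ childF T v u x₁, ∀ w₂ ∈ childF T v u x₂,
      ∀ a₁ a₂ : ℕ,
      ({leafE u x₁ w₁, rootE v u a₁} : Finset (Sym2 (Fin n)))
        = {leafE u x₂ w₂, rootE v u a₂} →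
      leafE u x₁ w₁ = leafE u x₂ w₂ ∧ rootE v u a₁ = rootE v u a₂ := by
    intro x₁ hx₁ x₂ hx₂ w₁ hw₁ w₂ hw₂ a₁ a₂ heq
    have h1 : leafE u x₁ w₁ ∈ ({leafE u x₂ w₂, rootE v u a₂} : Finset (Sym2 (Fin n))) := by
      rw [← heq]; exact Finset.mem_insert_self _ _
    have h2 : rootE v u a₁ ∈ ({leafE u x₂ w₂, rootE v u a₂} : Finset (Sym2 (Fin n))) := by
      rw [← heq]; exact Finset.mem_insert_of_mem (Finset.mem_singleton_self _)
    rw [Finset.mem_insert, Finset.mem_singleton] at h1 h2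
    rcases h1 with h1 | h1
    · rcases h2 with h2 | h2
      · exact absurd h2.symm (hleaf_ne_root x₂ hx₂ w₂ hw₂ a₁)
      · exact ⟨h1, h2⟩
    · exact absurd h1 (hleaf_ne_root x₁ hx₁ w₁ hw₁ a₂)
  -- cardinality of the new missed family
  have himcard : ∀ w ∈ childF T v u x,
      (((S.erase x).filter (fun a =>
        ¬ (edgeSeg f (leafE u x w) ∩ edgeSeg f (rootE v u a)).Nonempty)).image
        (fun a => ({leafE u x w, rootE v u a} : Finset (Sym2 (Fin n))))).card
      = ((S.erase x).filter (fun a =>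
        ¬ (edgeSeg f (leafE u x w) ∩ edgeSeg f (rootE v u a)).Nonempty)).card := by
    intro w hw
    apply Finset.card_image_of_injOn
    intro a₁ ha₁ a₂ ha₂ heq
    have ha₁S : a₁ ∈ S := Finset.mem_of_mem_erase (Finset.mem_filter.1 ha₁).1
    have ha₂S : a₂ ∈ S := Finset.mem_of_mem_erase (Finset.mem_filter.1 ha₂).1
    exact hroot_inj a₁ ha₁S a₂ ha₂S
      (hpair_eq x hxS x hxS w hw w hw a₁ a₂ heq).2
  have hnewdisj : ∀ w₁ ∈ childF T v u x, ∀ w₂ ∈ childF T v u x, w₁ ≠ w₂ →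
      Disjoint
        (((S.erase x).filter (fun a =>
          ¬ (edgeSeg f (leafE u x w₁) ∩ edgeSeg f (rootE v u a)).Nonempty)).image
          (fun a => ({leafE u x w₁, rootE v u a} : Finset (Sym2 (Fin n)))))
        (((S.erase x).filter (fun a =>
          ¬ (edgeSeg f (leafE u x w₂) ∩ edgeSeg f (rootE v u a)).Nonempty)).image
          (fun a => ({leafE u x w₂, rootE v u a} : Finset (Sym2 (Fin n))))) := by
    intro w₁ hw₁ w₂ hw₂ hww
    rw [Finset.disjoint_left]
    intro t ht₁ ht₂
    obtain ⟨a₁, _, hteq₁⟩ := Finset.mem_image.1 ht₁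
    obtain ⟨a₂, _, hteq₂⟩ := Finset.mem_image.1 ht₂
    have := (hpair_eq x hxS x hxS w₁ hw₁ w₂ hw₂ a₁ a₂ (hteq₁.trans hteq₂.symm)).1
    exact hww (hleaf_inj x hxS x hxS w₁ hw₁ w₂ hw₂ this).2
  have hMFnewcard : c x * ((S.card - 1) / 2) ≤ MFnew.card := by
    rw [hMFnewdef, Finset.card_biUnion hnewdisj]
    calc c x * ((S.card - 1) / 2)
        = ∑ _w ∈ childF T v u x, ((S.card - 1) / 2) := by
          rw [Finset.sum_const, hchildcard, smul_eq_mul]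
      _ ≤ ∑ w ∈ childF T v u x, (((S.erase x).filter (fun a =>
            ¬ (edgeSeg f (leafE u x w) ∩ edgeSeg f (rootE v u a)).Nonempty)).image
            (fun a => ({leafE u x w, rootE v u a} : Finset (Sym2 (Fin n))))).card := by
          apply Finset.sum_le_sum
          intro w hw
          rw [himcard w hw]
          exact hmissed w hw
  -- invariant for the new family
  have hMFnewprop : ∀ t ∈ MFnew, ∃ w' ∈ childF T v u x, ∃ a ∈ S.erase x,
      t = {leafE u x w', rootE v u a} ∧
      ¬ (edgeSeg f (leafE u x w') ∩ edgeSeg f (rootE v u a)).Nonempty := by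
    intro t ht
    rw [hMFnewdef, Finset.mem_biUnion] at ht
    obtain ⟨w, hw, ht⟩ := ht
    obtain ⟨a, ha, hteq⟩ := Finset.mem_image.1 ht
    rw [Finset.mem_filter] at ha
    exact ⟨w, hw, a, ha.1, hteq.symm, ha.2⟩
  -- induction hypothesis on S.erase x
  obtain ⟨MF', hMF'prop, L', hL'nd, hL'fin, hL'sum⟩ :=
    ih (S.erase x) (Finset.erase_ssubset hxS)
      (le_trans (Finset.erase_subset x S) hSk)
  have hdisjU : Disjoint MF' MFnew := by
    rw [Finset.disjoint_left]
    intro t htold htnew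
    obtain ⟨x₁, hx₁, w₁, hw₁, a₁, ha₁, _, hteq₁, _⟩ := hMF'prop t htold
    obtain ⟨w₂, hw₂, a₂, ha₂, hteq₂, _⟩ := hMFnewprop t htnew
    have hx₁S : x₁ ∈ S := Finset.mem_of_mem_erase hx₁
    have := (hpair_eq x₁ hx₁S x hxS w₁ hw₁ w₂ hw₂ a₁ a₂ (hteq₁.symm.trans hteq₂)).1
    exact (Finset.mem_erase.1 hx₁).1 (hleaf_inj x₁ hx₁S x hxS w₁ hw₁ w₂ hw₂ this).1
  have hxnotinL' : x ∉ L' := by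
    intro hmem
    have : x ∈ S.erase x := hL'fin ▸ List.mem_toFinset.2 hmem
    exact (Finset.mem_erase.1 this).1 rfl
  have hlen' : L'.length = S.card - 1 := by
    have h1 : L'.toFinset.card = L'.length := List.toFinset_card_of_nodup hL'nd
    rw [hL'fin] at h1
    rw [← h1, Finset.card_erase_of_mem hxS]
  refine ⟨MF' ∪ MFnew, ?_, L' ++ [x], ?_, ?_, ?_⟩
  · intro t ht
    rcases Finset.mem_union.1 ht with ht | ht
    · obtain ⟨x₁, hx₁, w₁, hw₁, a₁, ha₁, hne₁, hteq₁, hnc₁⟩ := hMF'prop t ht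
      exact ⟨x₁, Finset.mem_of_mem_erase hx₁, w₁, hw₁, a₁, Finset.mem_of_mem_erase ha₁,
        hne₁, hteq₁, hnc₁⟩
    · obtain ⟨w₂, hw₂, a₂, ha₂, hteq₂, hnc₂⟩ := hMFnewprop t ht
      exact ⟨x, hxS, w₂, hw₂, a₂, Finset.mem_of_mem_erase ha₂,
        (Finset.mem_erase.1 ha₂).1, hteq₂, hnc₂⟩
  · rw [List.nodup_append']
    exact ⟨hL'nd, List.nodup_singleton x, by
      intro y hy hy2
      rw [List.mem_singleton] at hy2
      exact hxnotinL' (hy2 ▸ hy)⟩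
  · rw [List.toFinset_append, hL'fin]
    have h1 : ([x] : List ℕ).toFinset = {x} := by simp
    rw [h1, Finset.union_comm, ← Finset.insert_eq, Finset.insert_erase hxS]
  · have hlenapp : (L' ++ [x]).length = L'.length + 1 := by simp
    rw [hlenapp, Finset.sum_range_succ]
    have hterm : ∀ jj ∈ Finset.range L'.length,
        (jj / 2) * c ((L' ++ [x]).getD jj 0) = (jj / 2) * c (L'.getD jj 0) := by
      intro jj hjj
      rw [Finset.mem_range] at hjj
      rw [List.getD_append _ _ _ _ hjj]
    have hlast : (L' ++ [x]).getD L'.length 0 = x := by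
      rw [List.getD_append_right _ _ _ _ (le_refl _)]
      simp
    rw [Finset.sum_congr rfl hterm, hlast]
    have hcard : (MF' ∪ MFnew).card = MF'.card + MFnew.card :=
      Finset.card_union_of_disjoint hdisjU
    have hc1 : L'.length / 2 * c x = c x * ((S.card - 1) / 2) := by
      rw [hlen', Nat.mul_comm]
    rw [hcard, hc1]
    omega

end MainPart

end D4Geo

open D4Geo

/-- Let `T` be a tree on `n` vertices of diameter exactly `4`, with root `v`
(the unique vertex of eccentricity `2`), of type `(c_1, …, c_k)`: `v` has exactly `k`
children `u 1, …, u k`, and `u i` has exactly `c i` children (so `c i = d(u i) − 1`), with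
`c_1 ≥ … ≥ c_k`. Let `d = ∑_{i ≥ 1, 2i+1 ≤ k} i·c_{2i+1} + ∑_{i ≥ 1, 2i+2 ≤ k} i·c_{2i+2}`.
Then in every legal rectilinear drawing of `T` the number of crossing pairs of edges is at
most `C(n−1, 2) − ∑_w C(d(w), 2) − d`. -/
theorem diameter_four_crossing_upper_bound (n k : ℕ) (T : SimpleGraph (Fin n))
    [DecidableRel T.Adj] (hT : T.IsTree)
    (hdiam : (∃ x y, T.dist x y = 4) ∧ ∀ x y, T.dist x y ≤ 4)
    (v : Fin n) (hroot : ∀ w, T.dist v w ≤ 2)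
    (hk : T.degree v = k)
    (u : ℕ → Fin n) (huinj : Set.InjOn u (Set.Icc 1 k))
    (huadj : ∀ i ∈ Finset.Icc 1 k, T.Adj v (u i))
    (c : ℕ → ℕ) (hc : ∀ i ∈ Finset.Icc 1 k, c i = T.degree (u i) - 1)
    (hsort : ∀ i j, 1 ≤ i → i ≤ j → j ≤ k → c j ≤ c i)
    (f : Fin n → ℝ × ℝ) (hf : IsLegalDrawing T f) :
    (crossCount T f : ℤ) ≤
      (Nat.choose (n - 1) 2 : ℤ) - ∑ w : Fin n, (Nat.choose (T.degree w) 2 : ℤ) -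
        ((∑ i ∈ (Finset.Icc 1 k).filter (fun i => 2 * i + 1 ≤ k),
            (i : ℤ) * (c (2 * i + 1) : ℤ)) +
         (∑ i ∈ (Finset.Icc 1 k).filter (fun i => 2 * i + 2 ≤ k),
            (i : ℤ) * (c (2 * i + 2) : ℤ))) := by
  classical
  obtain ⟨hfInj, hfSeg, _⟩ := hf
  -- edge finset counting
  set E := T.edgeFinset with hEdef
  have hEcard : E.card = n - 1 := by
    rw [hEdef]
    have h1 := hT.card_edgeFinset
    rw [Fintype.card_fin] at h1
    omega
  set P2 := E.powersetCard 2 with hP2def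
  have hP2card : P2.card = Nat.choose (n - 1) 2 := by
    rw [hP2def, Finset.card_powersetCard, hEcard]
  set I : Fin n → Finset (Finset (Sym2 (Fin n))) :=
    fun w => (T.incidenceFinset w).powersetCard 2 with hIdef
  have hIcard : ∀ w, (I w).card = Nat.choose (T.degree w) 2 := by
    intro w
    rw [hIdef, Finset.card_powersetCard, SimpleGraph.card_incidenceFinset_eq_degree]
  have hIsubE : ∀ w, T.incidenceFinset w ⊆ E := by
    intro w e he
    rw [SimpleGraph.mem_incidenceFinset] at he
    exact SimpleGraph.mem_edgeFinset.2 he.1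
  have hmemInc : ∀ (w : Fin n) (e : Sym2 (Fin n)), e ∈ T.incidenceFinset w → w ∈ e := by
    intro w e he
    rw [SimpleGraph.mem_incidenceFinset] at he
    exact he.2
  have hIsub : ∀ w, I w ⊆ P2 := fun w => Finset.powersetCard_mono (hIsubE w)
  have hIdisj : ∀ w ∈ Finset.univ, ∀ w' ∈ Finset.univ, w ≠ w' → Disjoint (I w) (I w') := by
    intro w _ w' _ hww
    rw [Finset.disjoint_left]
    intro t ht ht'
    rw [hIdef, Finset.mem_powersetCard] at ht ht'
    obtain ⟨e₁, e₂, hne, hteq⟩ := Finset.card_eq_two.1 ht.2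
    have h1 : e₁ ∈ t := by rw [hteq]; exact Finset.mem_insert_self _ _
    have h2 : e₂ ∈ t := by rw [hteq]; exact Finset.mem_insert_of_mem (Finset.mem_singleton_self _)
    exact hne (Sym2.eq_of_ne_mem hww (hmemInc w e₁ (ht.1 h1)) (hmemInc w' e₁ (ht'.1 h1))
      (hmemInc w e₂ (ht.1 h2)) (hmemInc w' e₂ (ht'.1 h2)))
  set ADJ := Finset.univ.biUnion I with hADJdef
  have hADJcard : ADJ.card = ∑ w : Fin n, Nat.choose (T.degree w) 2 := by
    rw [hADJdef, Finset.card_biUnion hIdisj]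
    exact Finset.sum_congr rfl (fun w _ => hIcard w)
  have hADJsub : ADJ ⊆ P2 := by
    rw [hADJdef]
    exact Finset.biUnion_subset.2 (fun w _ => hIsub w)
  set NAF := P2 \ ADJ with hNAFdef
  -- graph facts
  have hne_uv : ∀ i ∈ Finset.Icc 1 k, u i ≠ v := fun i hi => (huadj i hi).ne'
  have huinj' : ∀ i ∈ Finset.Icc 1 k, ∀ j ∈ Finset.Icc 1 k, u i = u j → i = j := by
    intro i hi j hj hij
    have h1 := Finset.mem_Icc.1 hi
    have h2 := Finset.mem_Icc.1 hj
    exact huinj (Set.mem_Icc.2 h1) (Set.mem_Icc.2 h2) hij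
  have hchild : ∀ x' ∈ Finset.Icc 1 k, ∀ w' ∈ childF T v u x', T.Adj (u x') w' ∧ w' ≠ v := by
    intro x' hx' w hw
    rw [childF, Finset.mem_sdiff, SimpleGraph.mem_neighborFinset] at hw
    exact ⟨hw.1, by simpa using hw.2⟩
  have hw_ne_ua : ∀ x' ∈ Finset.Icc 1 k, ∀ w ∈ childF T v u x', ∀ a ∈ Finset.Icc 1 k,
      w ≠ u a := by
    intro x' hx' w hw a ha hwa
    obtain ⟨hadj, hwv⟩ := hchild x' hx' w hw
    rw [hwa] at hadj
    exact no_triangle hT.IsAcyclic (huadj x' hx') hadj (huadj a ha)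
  -- the missed-pair family
  obtain ⟨MF, hMFprop, L, hLnd, hLfin, hLsum⟩ :=
    main_induct T v u c f hT.IsAcyclic hfInj hfSeg huinj huadj hc
      (Finset.Icc 1 k) (le_refl _)
  have hMFsub : MF ⊆ NAF := by
    intro t ht
    obtain ⟨x', hx', w', hw', a, ha, hax, hteq, _⟩ := hMFprop t ht
    obtain ⟨hadj', hwv'⟩ := hchild x' hx' w' hw'
    have hlE : leafE u x' w' ∈ E := SimpleGraph.mem_edgeFinset.2 hadj'
    have hrE : rootE v u a ∈ E := SimpleGraph.mem_edgeFinset.2 (huadj a ha)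
    have hlr : leafE u x' w' ≠ rootE v u a := by
      intro heq
      have hvmem : v ∈ leafE u x' w' := by
        rw [heq, rootE]
        exact Sym2.mem_mk_left v (u a)
      rw [leafE, Sym2.mem_iff] at hvmem
      rcases hvmem with h | h
      · exact hne_uv x' hx' h.symm
      · exact hwv' h.symm
    rw [hNAFdef, Finset.mem_sdiff]
    constructor
    · rw [hP2def, Finset.mem_powersetCard]
      constructor
      · rw [hteq]
        intro e he
        rw [Finset.mem_insert, Finset.mem_singleton] at he
        rcases he with rfl | rfl
        · exact hlE
        · exact hrE
      · rw [hteq, Finset.card_insert_of_notMem (by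
          rw [Finset.mem_singleton]; exact hlr), Finset.card_singleton]
    · intro hmem
      rw [hADJdef, Finset.mem_biUnion] at hmem
      obtain ⟨w, _, hwI⟩ := hmem
      rw [hIdef, Finset.mem_powersetCard] at hwI
      have h1 : w ∈ leafE u x' w' := hmemInc w _ (hwI.1 (by
        rw [hteq]; exact Finset.mem_insert_self _ _))
      have h2 : w ∈ rootE v u a := hmemInc w _ (hwI.1 (by
        rw [hteq]; exact Finset.mem_insert_of_mem (Finset.mem_singleton_self _)))
      rw [leafE, Sym2.mem_iff] at h1
      rw [rootE, Sym2.mem_iff] at h2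
      rcases h1 with rfl | rfl
      · rcases h2 with h2 | h2
        · exact hne_uv x' hx' h2
        · exact hax (huinj' a ha x' hx' h2.symm)
      · rcases h2 with h2 | h2
        · exact hwv' h2
        · exact hw_ne_ua x' hx' w hw' a ha h2
  -- the crossing set is inside the coe-image of NAF \ MF
  have hXsub : {s : Set (Sym2 (Fin n)) | ∃ e₁ e₂ : Sym2 (Fin n),
      e₁ ∈ T.edgeSet ∧ e₂ ∈ T.edgeSet ∧ (∀ x, x ∈ e₁ → x ∉ e₂) ∧
      (edgeSeg f e₁ ∩ edgeSeg f e₂).Nonempty ∧ s = {e₁, e₂}}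
      ⊆ (fun (t : Finset (Sym2 (Fin n))) => (↑t : Set (Sym2 (Fin n)))) '' ↑(NAF \ MF) := by
    rintro s ⟨e₁, e₂, he₁, he₂, hdisj, hcross, rfl⟩
    have hne12 : e₁ ≠ e₂ := by
      intro h
      exact hdisj e₁.out.1 (Sym2.out_fst_mem e₁) (h ▸ Sym2.out_fst_mem e₁)
    refine ⟨{e₁, e₂}, ?_, by simp⟩
    rw [Finset.mem_coe, Finset.mem_sdiff, hNAFdef, Finset.mem_sdiff]
    refine ⟨⟨?_, ?_⟩, ?_⟩
    · rw [hP2def, Finset.mem_powersetCard]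
      constructor
      · intro e he
        rw [Finset.mem_insert, Finset.mem_singleton] at he
        rcases he with rfl | rfl
        · exact SimpleGraph.mem_edgeFinset.2 he₁
        · exact SimpleGraph.mem_edgeFinset.2 he₂
      · rw [Finset.card_insert_of_notMem (by rw [Finset.mem_singleton]; exact hne12),
          Finset.card_singleton]
    · intro hmem
      rw [hADJdef, Finset.mem_biUnion] at hmem
      obtain ⟨w, _, hwI⟩ := hmem
      rw [hIdef, Finset.mem_powersetCard] at hwI
      have h1 : w ∈ e₁ := hmemInc w _ (hwI.1 (Finset.mem_insert_self _ _))
      have h2 : w ∈ e₂ := hmemInc w _ (hwI.1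
        (Finset.mem_insert_of_mem (Finset.mem_singleton_self _)))
      exact hdisj w h1 h2
    · intro hMF
      obtain ⟨x', hx', w', hw', a, ha, hax, hteq, hnc⟩ := hMFprop _ hMF
      have h1 : e₁ ∈ ({leafE u x' w', rootE v u a} : Finset (Sym2 (Fin n))) := by
        rw [← hteq]; exact Finset.mem_insert_self _ _
      have h2 : e₂ ∈ ({leafE u x' w', rootE v u a} : Finset (Sym2 (Fin n))) := by
        rw [← hteq]; exact Finset.mem_insert_of_mem (Finset.mem_singleton_self _)
      rw [Finset.mem_insert, Finset.mem_singleton] at h1 h2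
      rcases h1 with rfl | rfl
      · rcases h2 with rfl | rfl
        · exact hne12 rfl
        · exact hnc hcross
      · rcases h2 with rfl | rfl
        · rw [Set.inter_comm] at hcross
          exact hnc hcross
        · exact hne12 rfl
  -- cardinality chain
  have hcrossle : crossCount T f ≤ (NAF \ MF).card := by
    rw [crossCount]
    calc Set.ncard {s : Set (Sym2 (Fin n)) | ∃ e₁ e₂ : Sym2 (Fin n),
        e₁ ∈ T.edgeSet ∧ e₂ ∈ T.edgeSet ∧ (∀ x, x ∈ e₁ → x ∉ e₂) ∧
        (edgeSeg f e₁ ∩ edgeSeg f e₂).Nonempty ∧ s = {e₁, e₂}}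
        ≤ Set.ncard ((fun (t : Finset (Sym2 (Fin n))) => (↑t : Set (Sym2 (Fin n)))) ''
            ↑(NAF \ MF)) :=
          Set.ncard_le_ncard hXsub (Set.Finite.image _ (Finset.finite_toSet _))
      _ = Set.ncard (↑(NAF \ MF) : Set (Finset (Sym2 (Fin n)))) :=
          Set.ncard_image_of_injective _ Finset.coe_injective
      _ = (NAF \ MF).card := Set.ncard_coe_finset _
  -- the d-bound on MF.card
  have hLlen : L.length = k := by
    have h1 : L.toFinset.card = L.length := List.toFinset_card_of_nodup hLnd
    rw [hLfin, Nat.card_Icc] at h1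
    omega
  have hdle : ∑ jj ∈ Finset.range k, (jj / 2) * c (jj + 1) ≤ MF.card := by
    refine le_trans (rearrange c k hsort L hLnd hLfin) ?_
    rw [← hLlen]
    exact hLsum
  have hdid := d_identity c k
  -- final arithmetic
  have hMFle : MF.card ≤ NAF.card := Finset.card_le_card hMFsub
  have hsd : (NAF \ MF).card = NAF.card - MF.card := Finset.card_sdiff_of_subset hMFsub
  have hNAFc : NAF.card + ADJ.card = P2.card := by
    rw [hNAFdef]
    exact Finset.card_sdiff_add_card_eq_card hADJsub
  have hcast1 : (∑ i ∈ (Finset.Icc 1 k).filter (fun i => 2 * i + 1 ≤ k),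
      (i : ℤ) * (c (2 * i + 1) : ℤ))
      = ((∑ i ∈ (Finset.Icc 1 k).filter (fun i => 2 * i + 1 ≤ k), i * c (2 * i + 1) : ℕ) : ℤ) := by
    push_cast
    rfl
  have hcast2 : (∑ i ∈ (Finset.Icc 1 k).filter (fun i => 2 * i + 2 ≤ k),
      (i : ℤ) * (c (2 * i + 2) : ℤ))
      = ((∑ i ∈ (Finset.Icc 1 k).filter (fun i => 2 * i + 2 ≤ k), i * c (2 * i + 2) : ℕ) : ℤ) := by
    push_cast
    rfl
  have hcast3 : (∑ w : Fin n, (Nat.choose (T.degree w) 2 : ℤ))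
      = ((∑ w : Fin n, Nat.choose (T.degree w) 2 : ℕ) : ℤ) := by
    push_cast
    rfl
  rw [hcast1, hcast2, hcast3]
  have hcc : (crossCount T f : ℤ) ≤ ((NAF \ MF).card : ℤ) := by exact_mod_cast hcrossle
  omega
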